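/- Let p ≥ 5 be prime and define A_{i,j} = (1/p) Σ_{s=1}^{p-1} ω^{k_s} ε^{i s* + s j} for 0 ≤ i,j ≤ p-1, where ε = e^{2πi/p}, ω = e^{4πi/(p-1)}, s* is the inverse of s mod p, and k_s is the discrete log of s. Then for i ≠ 0 and any j, A_{i,j} = ω^{k_i} A_{1,n} where n ≡ ij (mod p), 0 ≤ n ≤ p-1; moreover A_{i,0} = A_{p-i,0} and A_{i,j} = A_{p-i,p-j} for i,j ≠ 0. -/

import Mathlib

open Finset Complex

/-- The matrix entries `A_{i,j} = (1/p) Σ_{s=1}^{p-1} ω^{k_s} ε^{i s* + s j}`,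
where `ω = e^{4πi/(p-1)}`, `ε = e^{2πi/p}`, `s*` is the inverse of `s` mod `p`
and `k_s` the discrete log of `s` base a primitive root `r`. -/
noncomputable def Amat (p : ℕ) (kf st : ℕ → ℕ) (i j : ℕ) : ℂ :=
  (1 / p) * ∑ s ∈ Icc 1 (p - 1),
    Complex.exp (4 * Real.pi * I / ((p : ℂ) - 1)) ^ (kf s) *
      Complex.exp (2 * Real.pi * I / (p : ℂ)) ^ (i * st s + s * j)

private lemma pow_eq_of_modEq' {ζ : ℂ} {m a b : ℕ} (hζ : ζ ^ m = 1) (h : a ≡ b [MOD m]) :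
    ζ ^ a = ζ ^ b := by
  rw [pow_eq_pow_mod a hζ, pow_eq_pow_mod b hζ]
  exact congrArg (fun k => ζ ^ k) h

/-- Symmetries of the entries `A_{i,j}`: for `i ≠ 0`,
`A_{i,j} = ω^{k_i} A_{1,n}` where `n ≡ ij (mod p)`, `0 ≤ n ≤ p-1`;
moreover `A_{i,0} = A_{p-i,0}` and `A_{i,j} = A_{p-i,p-j}` for `i, j ≠ 0`. -/
theorem stmt13 (p r : ℕ) (hp : p.Prime) (h5 : 5 ≤ p)
    (hr : orderOf (r : ZMod p) = p - 1) (kf st : ℕ → ℕ)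
    (hk : ∀ s ∈ Icc 1 (p - 1), kf s ∈ Icc 1 (p - 1) ∧ r ^ (kf s) ≡ s [MOD p])
    (hst : ∀ s ∈ Icc 1 (p - 1), st s ∈ Icc 1 (p - 1) ∧ s * st s ≡ 1 [MOD p]) :
    (∀ i ∈ Icc 1 (p - 1), ∀ j ≤ p - 1, ∀ n, n = i * j % p →
      Amat p kf st i j =
        Complex.exp (4 * Real.pi * I / ((p : ℂ) - 1)) ^ (kf i) *
          Amat p kf st 1 n) ∧
    (∀ i ∈ Icc 1 (p - 1), Amat p kf st i 0 = Amat p kf st (p - i) 0) ∧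
    (∀ i ∈ Icc 1 (p - 1), ∀ j ∈ Icc 1 (p - 1),
      Amat p kf st i j = Amat p kf st (p - i) (p - j)) := by
  haveI : Fact p.Prime := ⟨hp⟩
  have hp0 : 0 < p := hp.pos
  have hodd : p % 2 = 1 := Nat.odd_iff.mp (hp.odd_of_ne_two (by omega))
  set ω : ℂ := Complex.exp (4 * Real.pi * I / ((p : ℂ) - 1)) with hωdef
  set ε : ℂ := Complex.exp (2 * Real.pi * I / (p : ℂ)) with hεdef
  have hpC : (p : ℂ) ≠ 0 := Nat.cast_ne_zero.mpr hp0.ne'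
  have hp1C : ((p : ℂ) - 1) ≠ 0 := by
    intro h
    have h1 : (p : ℂ) = ((1 : ℕ) : ℂ) := by push_cast; linear_combination h
    have := Nat.cast_injective (R := ℂ) h1
    omega
  have hp1cast : ((p - 1 : ℕ) : ℂ) = (p : ℂ) - 1 := by
    push_cast [Nat.cast_sub hp0]; ring
  -- ε^p = 1
  have hεp : ε ^ p = 1 := by
    rw [hεdef, ← Complex.exp_nat_mul]
    rw [show (p : ℂ) * (2 * Real.pi * I / (p : ℂ)) = 2 * Real.pi * I by field_simp]
    exact Complex.exp_two_pi_mul_I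
  -- ω^(p-1) = 1
  have hω1 : ω ^ (p - 1) = 1 := by
    rw [hωdef, ← Complex.exp_nat_mul, hp1cast]
    rw [show ((p : ℂ) - 1) * (4 * Real.pi * I / ((p : ℂ) - 1)) =
        ((2 : ℕ) : ℂ) * (2 * Real.pi * I) by field_simp; ring]
    exact Complex.exp_nat_mul_two_pi_mul_I 2
  -- q = (p-1)/2 and ω^q = 1
  set q : ℕ := (p - 1) / 2 with hqdef
  have hq2 : 2 * q = p - 1 := by omega
  have hqcast : (q : ℂ) = ((p : ℂ) - 1) / 2 := by
    have : ((2 * q : ℕ) : ℂ) = ((p - 1 : ℕ) : ℂ) := by rw [hq2]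
    push_cast at this
    rw [hp1cast] at this
    linear_combination this / 2
  have hωq : ω ^ q = 1 := by
    rw [hωdef, ← Complex.exp_nat_mul]
    rw [show (q : ℂ) * (4 * Real.pi * I / ((p : ℂ) - 1)) = 2 * Real.pi * I by
      rw [hqcast]; field_simp; ring]
    exact Complex.exp_two_pi_mul_I
  -- congruence helpers
  have hεcongr : ∀ a b : ℕ, ((a : ZMod p) = (b : ZMod p)) → ε ^ a = ε ^ b := fun a b h =>
    pow_eq_of_modEq' hεp ((ZMod.natCast_eq_natCast_iff a b p).mp h)
  have hωcongr : ∀ a b : ℕ, a ≡ b [MOD p - 1] → ω ^ a = ω ^ b := fun a b h =>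
    pow_eq_of_modEq' hω1 h
  have hrne : (r : ZMod p) ≠ 0 := by
    intro h0
    have h1 : (r : ZMod p) ^ (p - 1) = 1 := by rw [← hr]; exact pow_orderOf_eq_one _
    rw [h0, zero_pow (by omega)] at h1
    exact zero_ne_one h1
  have hrlog : ∀ a b : ℕ, (r : ZMod p) ^ a = (r : ZMod p) ^ b → a ≡ b [MOD p - 1] := by
    intro a b h
    set u : (ZMod p)ˣ := Units.mk0 _ hrne with hu
    have hcoe : (u : ZMod p) = (r : ZMod p) := rfl
    have h2 : u ^ a = u ^ b := Units.ext (by simpa [hcoe] using h)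
    have h3 := pow_eq_pow_iff_modEq.mp h2
    rwa [← orderOf_units, hcoe, hr] at h3
  -- discrete log and inverse facts in ZMod p
  have hks : ∀ s ∈ Icc 1 (p - 1), (r : ZMod p) ^ (kf s) = (s : ZMod p) := by
    intro s hs
    have := (ZMod.natCast_eq_natCast_iff _ _ _).mpr (hk s hs).2
    push_cast at this
    exact this
  have hsts : ∀ s ∈ Icc 1 (p - 1), (s : ZMod p) * (st s : ZMod p) = 1 := by
    intro s hs
    have := (ZMod.natCast_eq_natCast_iff _ _ _).mpr (hst s hs).2
    push_cast at this
    exact this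
  -- membership facts
  have hmemIcc : ∀ a : ℕ, a ∈ Icc 1 (p - 1) ↔ 1 ≤ a ∧ a ≤ p - 1 := fun a => mem_Icc
  have hmod : ∀ a b : ℕ, b < p → (a : ZMod p) = (b : ZMod p) → a % p = b := by
    intro a b hb h
    have := (ZMod.natCast_eq_natCast_iff' a b p).mp h
    rwa [Nat.mod_eq_of_lt hb] at this
  have hmulmem : ∀ a b : ℕ, a ∈ Icc 1 (p - 1) → b ∈ Icc 1 (p - 1) →
      (a * b) % p ∈ Icc 1 (p - 1) := by
    intro a b ha hb
    rw [hmemIcc] at ha hb ⊢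
    have hlt : (a * b) % p < p := Nat.mod_lt _ hp0
    have hne : (a * b) % p ≠ 0 := by
      intro h
      have : p ∣ a * b := Nat.dvd_of_mod_eq_zero h
      rcases (Nat.Prime.dvd_mul hp).mp this with h' | h'
      · exact absurd (Nat.le_of_dvd (by omega) h') (by omega)
      · exact absurd (Nat.le_of_dvd (by omega) h') (by omega)
    omega
  -- r^q = -1
  have hhalf : (r : ZMod p) ^ q = -1 := by
    have hsq : ((r : ZMod p) ^ q) * ((r : ZMod p) ^ q) = 1 := by
      rw [← pow_add, show q + q = p - 1 by omega, ← hr]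
      exact pow_orderOf_eq_one _
    rcases mul_self_eq_one_iff.mp hsq with h | h
    · exfalso
      have : orderOf (r : ZMod p) ∣ q := orderOf_dvd_of_pow_eq_one h
      rw [hr] at this
      have := Nat.le_of_dvd (by omega) this
      omega
    · exact h
  -- general flip lemma for claims 2 and 3
  have flip : ∀ i ∈ Icc 1 (p - 1), ∀ j j' : ℕ, ((j' : ZMod p) = -(j : ZMod p)) →
      Amat p kf st i j = Amat p kf st (p - i) j' := by
    intro i hi j j' hj'
    rw [hmemIcc] at hi
    simp only [Amat, ← hωdef, ← hεdef]
    congr 1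
    refine Finset.sum_nbij' (fun s => p - s) (fun s => p - s) ?_ ?_ ?_ ?_ ?_
    · intro a ha; rw [hmemIcc] at ha; show p - a ∈ Icc 1 (p - 1); rw [hmemIcc]; omega
    · intro a ha; rw [hmemIcc] at ha; show p - a ∈ Icc 1 (p - 1); rw [hmemIcc]; omega
    · intro a ha; rw [hmemIcc] at ha; show p - (p - a) = a; omega
    · intro a ha; rw [hmemIcc] at ha; show p - (p - a) = a; omega
    · intro s hs
      show ω ^ (kf s) * ε ^ (i * st s + s * j) =
        ω ^ (kf (p - s)) * ε ^ ((p - i) * st (p - s) + (p - s) * j')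
      have hs' : p - s ∈ Icc 1 (p - 1) := by rw [hmemIcc] at hs ⊢; omega
      rw [hmemIcc] at hs
      have hscast : ((p - s : ℕ) : ZMod p) = -(s : ZMod p) := by
        push_cast [Nat.cast_sub (by omega : s ≤ p)]
        simp [ZMod.natCast_self]
      have hicast : ((p - i : ℕ) : ZMod p) = -(i : ZMod p) := by
        push_cast [Nat.cast_sub (by omega : i ≤ p)]
        simp [ZMod.natCast_self]
      -- ω part
      have h1 : kf (p - s) ≡ kf s + q [MOD p - 1] := by
        apply hrlog
        rw [pow_add, hks _ hs', hks s (by rw [hmemIcc]; omega), hhalf, hscast]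
        ring
      have hω : ω ^ (kf s) = ω ^ (kf (p - s)) := by
        calc ω ^ (kf s) = ω ^ (kf s) * ω ^ q := by rw [hωq, mul_one]
          _ = ω ^ (kf s + q) := (pow_add ω _ _).symm
          _ = ω ^ (kf (p - s)) := (hωcongr _ _ h1).symm
      -- ε part: inverse of p - s
      have hstps : (st (p - s) : ZMod p) = -(st s : ZMod p) := by
        have h4 := hsts _ hs'
        rw [hscast] at h4
        have h2 := hsts s (by rw [hmemIcc]; omega)
        calc (st (p - s) : ZMod p) = ((s : ZMod p) * st s) * st (p - s) := by
              rw [h2, one_mul]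
          _ = -(st s : ZMod p) * (-(s : ZMod p) * st (p - s)) := by ring
          _ = -(st s : ZMod p) := by rw [h4, mul_one]
      have hε : ε ^ (i * st s + s * j) = ε ^ ((p - i) * st (p - s) + (p - s) * j') := by
        apply hεcongr
        push_cast
        rw [hscast, hicast, hstps, hj']
        ring
      rw [hω, hε]
  refine ⟨?_, ?_, ?_⟩
  · -- claim 1
    intro i hi j hj n hn
    have hicc := hi
    rw [hmemIcc] at hi
    have hi' : (st i : ZMod p) * (i : ZMod p) = 1 := by
      rw [mul_comm]; exact hsts i hicc
    have hsti := (hst i hicc).1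
    simp only [Amat, ← hωdef, ← hεdef]
    rw [mul_left_comm]
    congr 1
    rw [Finset.mul_sum]
    refine Finset.sum_nbij' (fun s => (st i * s) % p) (fun t => (i * t) % p) ?_ ?_ ?_ ?_ ?_
    · intro a ha; exact hmulmem _ _ hsti ha
    · intro a ha; exact hmulmem _ _ hicc ha
    · intro a ha
      rw [hmemIcc] at ha
      show (i * ((st i * a) % p)) % p = a
      apply hmod _ _ (by omega)
      push_cast [ZMod.natCast_mod]
      linear_combination ((a : ZMod p)) * (hsts i hicc)
    · intro a ha
      rw [hmemIcc] at ha
      show (st i * ((i * a) % p)) % p = a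
      apply hmod _ _ (by omega)
      push_cast [ZMod.natCast_mod]
      linear_combination ((a : ZMod p)) * hi'
    · intro s hs
      show ω ^ (kf s) * ε ^ (i * st s + s * j) =
        ω ^ (kf i) * (ω ^ (kf ((st i * s) % p)) *
          ε ^ (1 * st ((st i * s) % p) + ((st i * s) % p) * n))
      set t : ℕ := (st i * s) % p with htdef
      have ht : t ∈ Icc 1 (p - 1) := hmulmem _ _ hsti hs
      have htcast : (t : ZMod p) = (st i : ZMod p) * (s : ZMod p) := by
        rw [htdef]; push_cast [ZMod.natCast_mod]; ring
      have hncast : (n : ZMod p) = (i : ZMod p) * (j : ZMod p) := by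
        rw [hn]; push_cast [ZMod.natCast_mod]; ring
      have h2 := hsts s hs
      have h3 := hsts t ht
      -- ω part
      have hω : ω ^ (kf i) * ω ^ (kf t) = ω ^ (kf s) := by
        rw [← pow_add]
        apply hωcongr
        apply hrlog
        rw [pow_add, hks i hicc, hks t ht, hks s hs, htcast]
        linear_combination ((s : ZMod p)) * (hsts i hicc)
      -- st t = i * st s in ZMod p
      have hA : ((i : ZMod p) * (st s : ZMod p)) * (t : ZMod p) = 1 := by
        rw [htcast]
        calc ((i : ZMod p) * st s) * ((st i : ZMod p) * s)
            = ((i : ZMod p) * st i) * ((s : ZMod p) * st s) := by ring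
          _ = 1 := by rw [hsts i hicc, h2, one_mul]
      have hstt : (st t : ZMod p) = (i : ZMod p) * (st s : ZMod p) := by
        calc (st t : ZMod p) = (((i : ZMod p) * st s) * t) * st t := by rw [hA, one_mul]
          _ = ((i : ZMod p) * st s) * ((t : ZMod p) * st t) := by ring
          _ = (i : ZMod p) * st s := by rw [h3, mul_one]
      have hε : ε ^ (i * st s + s * j) = ε ^ (1 * st t + t * n) := by
        apply hεcongr
        push_cast
        rw [hstt, htcast, hncast]
        linear_combination (-(s : ZMod p) * (j : ZMod p)) * (hsts i hicc)
      rw [hε, ← hω]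
      ring
  · -- claim 2
    intro i hi
    exact flip i hi 0 0 (by simp)
  · -- claim 3
    intro i hi j hj
    rw [hmemIcc] at hj
    apply flip i hi j (p - j)
    push_cast [Nat.cast_sub (by omega : j ≤ p)]
    simp [ZMod.natCast_self]
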